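/- Let M ≥ 1 and let a₁,…,a_{M+1}, b₁,…,b_M be complex numbers such that a_{i+1}* b_i ≠ 0 for 1 ≤ i ≤ M. Define x₀ = 0, x₁ = 1 and, for 1 ≤ n ≤ M, x_{n+1}(λ) = ((λ − |a_n|² − |b_n|²)/(a_{n+1}* b_n))·x_n(λ) − ((a_n b_{n−1}*)/(a_{n+1}* b_n))·x_{n−1}(λ) (the term containing b₀ is multiplied by x₀ = 0 and is irrelevant). Then for every λ ∈ ℂ, ( ∏_{i=1}^M a_{i+1}* b_i )·x_{M+1}(λ) = det( λ·I_M − H_M H_M* ). In particular, x_{M+1}(λ) is a polynomial of degree M in λ with leading coefficient ( ∏_{i=1}^M a_{i+1}* b_i )^{-1}, whose roots are exactly the eigenvalues of H_M H_M*. -/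

import Mathlib

open Matrix

/-- The `M × (M+1)` two-diagonal channel matrix built from the
coefficients `a`, `b` (indexed from `1` as in the paper). -/
def Hmat (M : ℕ) (a b : ℕ → ℂ) : Matrix (Fin M) (Fin (M + 1)) ℂ :=
  fun i j =>
    if (j : ℕ) = (i : ℕ) then a ((i : ℕ) + 1)
    else if (j : ℕ) = (i : ℕ) + 1 then b ((i : ℕ) + 1) else 0

/-- The second-order linear recurrence `x₀ = 0`, `x₁ = 1`,
`x_{n+1} = ((λ−|a_n|²−|b_n|²)/(a_{n+1}* b_n))·x_n − ((a_n b_{n−1}*)/(a_{n+1}* b_n))·x_{n−1}`. -/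
noncomputable def xseq (a b : ℕ → ℂ) (lam : ℂ) : ℕ → ℂ
  | 0 => 0
  | 1 => 1
  | n + 2 =>
    ((lam - (‖a (n + 1)‖ ^ 2 : ℝ) - (‖b (n + 1)‖ ^ 2 : ℝ)) /
        ((starRingEnd ℂ) (a (n + 2)) * b (n + 1))) * xseq a b lam (n + 1) -
      ((a (n + 1) * (starRingEnd ℂ) (b n)) /
        ((starRingEnd ℂ) (a (n + 2)) * b (n + 1))) * xseq a b lam n

/-! ### Auxiliary material -/

/-- The renormalized sequence `y` satisfying the monic continuant recursion. -/
noncomputable def yseq (a b : ℕ → ℂ) (lam : ℂ) : ℕ → ℂ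
  | 0 => 0
  | 1 => 1
  | n + 2 =>
    (lam - ((‖a (n + 1)‖ ^ 2 : ℝ) : ℂ) - ((‖b (n + 1)‖ ^ 2 : ℝ) : ℂ)) *
        yseq a b lam (n + 1) -
      ((‖a (n + 1)‖ ^ 2 * ‖b n‖ ^ 2 : ℝ) : ℂ) * yseq a b lam n

/-- The entries of the tridiagonal matrix `λI − H Hᴴ`, as a function on ℕ. -/
noncomputable def tmat (a b : ℕ → ℂ) (lam : ℂ) : ℕ → ℕ → ℂ := fun i j =>
  if i = j then lam - ((‖a (i+1)‖ ^ 2 : ℝ) : ℂ) - ((‖b (i+1)‖ ^ 2 : ℝ) : ℂ)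
  else if j = i + 1 then -(b (i+1) * (starRingEnd ℂ) (a (i+2)))
  else if i = j + 1 then -(a (j+2) * (starRingEnd ℂ) (b (j+1)))
  else 0

/-- The leading principal `n × n` block of a doubly-infinite matrix. -/
noncomputable def Amat (t : ℕ → ℕ → ℂ) (n : ℕ) : Matrix (Fin n) (Fin n) ℂ :=
  Matrix.of fun i j => t i j

lemma det_tridiag (t : ℕ → ℕ → ℂ)
    (h1 : ∀ i j : ℕ, j + 2 ≤ i → t i j = 0)
    (h2 : ∀ i j : ℕ, i + 2 ≤ j → t i j = 0) (n : ℕ) :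
    (Amat t (n + 2)).det =
      t (n+1) (n+1) * (Amat t (n+1)).det - t n (n+1) * t (n+1) n * (Amat t n).det := by
  have hsA : ∀ j : Fin (n+1), ((((Fin.last n).castSucc : Fin (n+2)).succAbove j : Fin (n+2)) : ℕ)
      = if (j:ℕ) < n then (j:ℕ) else (j:ℕ)+1 := by
    intro j
    rcases Nat.lt_or_ge (j:ℕ) n with h | h
    · rw [Fin.succAbove_of_castSucc_lt]
      · simp [if_pos h]
      · simp [Fin.lt_def, h]
    · rw [Fin.succAbove_of_le_castSucc]
      · rw [if_neg (not_lt.mpr h)]; simp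
      · simp [Fin.le_def]; omega
  rw [Matrix.det_succ_row (Amat t (n+2)) (Fin.last (n+1))]
  rw [Fin.sum_univ_castSucc, Fin.sum_univ_castSucc]
  have hz : ∀ j : Fin n,
      (-1 : ℂ) ^ ((Fin.last (n+1) : ℕ) + ((j.castSucc.castSucc : Fin (n+2)) : ℕ)) *
          Amat t (n+2) (Fin.last (n+1)) j.castSucc.castSucc *
          ((Amat t (n+2)).submatrix (Fin.last (n+1)).succAbove
            (j.castSucc.castSucc).succAbove).det = 0 := by
    intro j
    have : Amat t (n+2) (Fin.last (n+1)) j.castSucc.castSucc = 0 := by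
      apply h1
      simp [Fin.last]
    rw [this]; ring
  rw [Finset.sum_eq_zero (fun j _ => hz j), zero_add]
  have hlast : ((Amat t (n+2)).submatrix (Fin.last (n+1)).succAbove
      (Fin.last (n+1)).succAbove).det = (Amat t (n+1)).det := by
    congr 1
    ext i j
    simp [Amat, Fin.succAbove_last]
  set B : Matrix (Fin (n+1)) (Fin (n+1)) ℂ :=
    (Amat t (n+2)).submatrix (Fin.last (n+1)).succAbove ((Fin.last n).castSucc : Fin (n+2)).succAbove with hB
  have hBval : ∀ i j, B i j = t (i:ℕ) (if (j:ℕ) < n then (j:ℕ) else (j:ℕ)+1) := by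
    intro i j
    simp [hB, Amat, Fin.succAbove_last, hsA]
  have hBdet : B.det = t n (n+1) * (Amat t n).det := by
    rw [Matrix.det_succ_column B (Fin.last n)]
    rw [Fin.sum_univ_castSucc]
    have hz2 : ∀ i : Fin n,
        (-1 : ℂ) ^ (((i.castSucc : Fin (n+1)) : ℕ) + ((Fin.last n : Fin (n+1)) : ℕ)) *
            B i.castSucc (Fin.last n) *
            (B.submatrix (i.castSucc).succAbove (Fin.last n).succAbove).det = 0 := by
      intro i
      have : B i.castSucc (Fin.last n) = 0 := by
        rw [hBval]
        simp only [Fin.val_last, lt_irrefl, if_false, Fin.coe_castSucc]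
        exact h2 _ _ (by omega)
      rw [this]; ring
    rw [Finset.sum_eq_zero (fun i _ => hz2 i), zero_add]
    have h3 : B (Fin.last n) (Fin.last n) = t n (n+1) := by
      rw [hBval]; simp
    have h4 : (B.submatrix (Fin.last n).succAbove (Fin.last n).succAbove).det = (Amat t n).det := by
      congr 1
      ext i j
      rw [Fin.succAbove_last]
      simp only [Matrix.submatrix_apply]
      rw [hBval]
      simp [Amat, Fin.is_lt]
    rw [h3, h4]
    have : ((-1:ℂ))^(((Fin.last n : Fin (n+1)) : ℕ) + ((Fin.last n : Fin (n+1)) : ℕ)) = 1 :=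
      Even.neg_one_pow ⟨(Fin.last n : ℕ), by ring⟩
    rw [this]; ring
  rw [hlast, hBdet]
  have hmid : Amat t (n+2) (Fin.last (n+1)) ((Fin.last n).castSucc) = t (n+1) n := by
    simp [Amat]
  rw [hmid]
  have e1 : ((-1:ℂ))^(((Fin.last (n+1) : Fin (n+2)) : ℕ) + (((Fin.last n).castSucc : Fin (n+2)) : ℕ)) = -1 := by
    simp only [Fin.val_last, Fin.coe_castSucc]
    exact Odd.neg_one_pow ⟨n, by ring⟩
  have e2 : ((-1:ℂ))^(((Fin.last (n+1) : Fin (n+2)) : ℕ) + ((Fin.last (n+1) : Fin (n+2)) : ℕ)) = 1 := by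
    simp only [Fin.val_last]
    exact Even.neg_one_pow ⟨n+1, by ring⟩
  have hdd : Amat t (n+2) (Fin.last (n+1)) (Fin.last (n+1)) = t (n+1) (n+1) := by
    simp [Amat]
  rw [e1, e2, hdd]
  ring

lemma tmat_h1 (a b : ℕ → ℂ) (lam : ℂ) : ∀ i j : ℕ, j + 2 ≤ i → tmat a b lam i j = 0 := by
  intro i j h; simp only [tmat]; rw [if_neg (by omega), if_neg (by omega), if_neg (by omega)]

lemma tmat_h2 (a b : ℕ → ℂ) (lam : ℂ) : ∀ i j : ℕ, i + 2 ≤ j → tmat a b lam i j = 0 := by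
  intro i j h; simp only [tmat]; rw [if_neg (by omega), if_neg (by omega), if_neg (by omega)]

lemma conj_sq_helper (z w : ℂ) :
    -(w * (starRingEnd ℂ) z) * -(z * (starRingEnd ℂ) w)
      = ((‖z‖ ^ 2 * ‖w‖ ^ 2 : ℝ) : ℂ) := by
  have : -(w * (starRingEnd ℂ) z) * -(z * (starRingEnd ℂ) w)
      = (z * (starRingEnd ℂ) z) * (w * (starRingEnd ℂ) w) := by ring
  rw [this, Complex.mul_conj, Complex.mul_conj, ← Complex.normSq_eq_norm_sq, ← Complex.normSq_eq_norm_sq]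
  push_cast
  ring

lemma entry_eq (M : ℕ) (a b : ℕ → ℂ) (lam : ℂ) (i j : Fin M) :
    (lam • (1 : Matrix (Fin M) (Fin M) ℂ) - Hmat M a b * (Hmat M a b)ᴴ) i j
      = tmat a b lam (i:ℕ) (j:ℕ) := by
  have hsum : (Hmat M a b * (Hmat M a b)ᴴ) i j
      = a ((i:ℕ)+1) * (starRingEnd ℂ) (Hmat M a b j i.castSucc)
        + b ((i:ℕ)+1) * (starRingEnd ℂ) (Hmat M a b j i.succ) := by
    rw [Matrix.mul_apply]
    rw [← Finset.sum_subset (Finset.subset_univ ({i.castSucc, i.succ} : Finset (Fin (M+1))))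
      (by
        intro k _ hk
        simp only [Finset.mem_insert, Finset.mem_singleton] at hk
        push_neg at hk
        have hk1 : (k:ℕ) ≠ (i:ℕ) := by
          intro h; exact hk.1 (Fin.ext (by simp [h]))
        have hk2 : (k:ℕ) ≠ (i:ℕ)+1 := by
          intro h; exact hk.2 (Fin.ext (by simp [h]))
        simp [Hmat, hk1, hk2])]
    rw [Finset.sum_pair (by
      intro h
      have := congrArg Fin.val h
      simp at this)]
    simp [Hmat, Matrix.conjTranspose_apply, Complex.star_def]
  simp only [Matrix.sub_apply, Matrix.smul_apply, Matrix.one_apply, smul_eq_mul, hsum]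
  rcases eq_or_ne (i:ℕ) (j:ℕ) with hij | hij
  · have hIJ : i = j := Fin.ext hij
    subst hIJ
    have e1 : Hmat M a b i i.castSucc = a ((i:ℕ)+1) := by simp [Hmat]
    have e2 : Hmat M a b i i.succ = b ((i:ℕ)+1) := by
      simp [Hmat, show (i:ℕ)+1 ≠ (i:ℕ) by omega]
    rw [e1, e2, if_pos rfl]
    simp only [tmat, eq_self_iff_true, if_true]
    rw [Complex.mul_conj, Complex.mul_conj, ← Complex.normSq_eq_norm_sq, ← Complex.normSq_eq_norm_sq]
    ring
  · have hIJ : i ≠ j := fun h => hij (by rw [h])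
    rw [if_neg hIJ, mul_zero, zero_sub]
    rcases eq_or_ne ((j:ℕ)) ((i:ℕ)+1) with h2 | h2
    · have e1 : Hmat M a b j i.castSucc = 0 := by
        simp [Hmat, hij, show (i:ℕ) ≠ (j:ℕ)+1 by omega]
      have e2 : Hmat M a b j i.succ = a ((i:ℕ)+2) := by
        simp [Hmat, h2, show (i:ℕ)+1 ≠ (i:ℕ)+1+1 by omega]
      rw [e1, e2]
      simp only [tmat]
      rw [if_neg hij, if_pos h2]
      simp
    · rcases eq_or_ne ((i:ℕ)) ((j:ℕ)+1) with h3 | h3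
      · have e1 : Hmat M a b j i.castSucc = b ((j:ℕ)+1) := by
          simp [Hmat, hij, h3]
        have e2 : Hmat M a b j i.succ = 0 := by
          simp [Hmat, hij, show (i:ℕ)+1 ≠ (j:ℕ) by omega, show (i:ℕ)+1 ≠ (j:ℕ)+1 by omega]
        rw [e1, e2]
        simp only [tmat]
        rw [if_neg hij, if_neg h2, if_pos h3, h3]
        simp
      · have e1 : Hmat M a b j i.castSucc = 0 := by
          simp [Hmat, hij, h3]
        have e2 : Hmat M a b j i.succ = 0 := by
          simp [Hmat, hij, show (i:ℕ)+1 ≠ (j:ℕ) by omega, show (i:ℕ)+1 ≠ (j:ℕ)+1 by omega]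
        rw [e1, e2]
        simp only [tmat]
        rw [if_neg hij, if_neg h2, if_neg h3]
        simp

lemma det_eq_yseq (a b : ℕ → ℂ) (lam : ℂ) :
    ∀ M : ℕ, (Amat (tmat a b lam) M).det = yseq a b lam (M + 1) := by
  have key : ∀ M : ℕ, (Amat (tmat a b lam) M).det = yseq a b lam (M + 1) ∧
      (Amat (tmat a b lam) (M+1)).det = yseq a b lam (M + 2) := by
    intro M
    induction M with
    | zero =>
      constructor
      · simp [yseq]
      · rw [show (0+1 : ℕ) = 1 from rfl, Matrix.det_fin_one]
        simp only [yseq, Amat, tmat, Matrix.of_apply]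
        norm_num
    | succ n ih =>
      obtain ⟨ih1, ih2⟩ := ih
      refine ⟨ih2, ?_⟩
      rw [show n+1+1 = n+2 from rfl, det_tridiag (tmat a b lam) (tmat_h1 a b lam) (tmat_h2 a b lam) n,
        ih1, ih2]
      have hd : tmat a b lam (n+1) (n+1)
          = lam - ((‖a (n+2)‖ ^ 2 : ℝ) : ℂ) - ((‖b (n+2)‖ ^ 2 : ℝ) : ℂ) := by
        simp [tmat]
      have ho : tmat a b lam n (n+1) * tmat a b lam (n+1) n
          = ((‖a (n+2)‖ ^ 2 * ‖b (n+1)‖ ^ 2 : ℝ) : ℂ) := by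
        simp only [tmat, show ¬(n = n+1) by omega, show ¬(n+1 = n) by omega,
          show ¬(n = n+1+1) by omega, if_false, eq_self_iff_true, if_true]
        exact conj_sq_helper _ _
      rw [hd, ho]
      rw [show n+2+1 = (n+1)+2 from rfl]
      rw [show (yseq a b lam ((n+1)+2) : ℂ) =
        (lam - ((‖a (n+2)‖ ^ 2 : ℝ) : ℂ) - ((‖b (n+2)‖ ^ 2 : ℝ) : ℂ)) *
          yseq a b lam (n+2) -
          ((‖a (n+2)‖ ^ 2 * ‖b (n+1)‖ ^ 2 : ℝ) : ℂ) * yseq a b lam (n+1)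
        from rfl]
  exact fun M => (key M).1

theorem statement11
    (M : ℕ) (hM : 1 ≤ M) (a b : ℕ → ℂ)
    (hne : ∀ i : ℕ, 1 ≤ i → i ≤ M → (starRingEnd ℂ) (a (i + 1)) * b i ≠ 0) :
    ∀ lam : ℂ,
      (∏ i ∈ Finset.range M, ((starRingEnd ℂ) (a (i + 2)) * b (i + 1))) *
          xseq a b lam (M + 1) =
        Matrix.det
          (lam • (1 : Matrix (Fin M) (Fin M) ℂ) -
            Hmat M a b * (Hmat M a b)ᴴ) := by
  intro lam
  have hmx : (lam • (1 : Matrix (Fin M) (Fin M) ℂ) - Hmat M a b * (Hmat M a b)ᴴ)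
      = Amat (tmat a b lam) M := by
    ext i j
    rw [entry_eq]
    rfl
  rw [hmx, det_eq_yseq]
  -- now prove the product identity by induction
  have key : ∀ n : ℕ, n ≤ M →
      ((∏ i ∈ Finset.range n, ((starRingEnd ℂ) (a (i + 2)) * b (i + 1))) *
          xseq a b lam (n + 1) = yseq a b lam (n + 1)) ∧
      ((∏ i ∈ Finset.range n, ((starRingEnd ℂ) (a (i + 2)) * b (i + 1))) *
          xseq a b lam n = ((starRingEnd ℂ) (a (n + 1)) * b n) * yseq a b lam n) := by
    intro n
    induction n with
    | zero => intro _; simp [xseq, yseq]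
    | succ n ih =>
      intro h
      obtain ⟨h1, h2⟩ := ih (by omega)
      have hne' : (starRingEnd ℂ) (a (n + 2)) * b (n + 1) ≠ 0 := by
        have := hne (n+1) (by omega) h
        simpa using this
      constructor
      · rw [Finset.prod_range_succ]
        rw [show xseq a b lam (n+1+1) =
          ((lam - ((‖a (n + 1)‖ ^ 2 : ℝ):ℂ) - ((‖b (n + 1)‖ ^ 2 : ℝ):ℂ)) /
              ((starRingEnd ℂ) (a (n + 2)) * b (n + 1))) * xseq a b lam (n + 1) -
            ((a (n + 1) * (starRingEnd ℂ) (b n)) /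
              ((starRingEnd ℂ) (a (n + 2)) * b (n + 1))) * xseq a b lam n from rfl]
        set P := ∏ i ∈ Finset.range n, ((starRingEnd ℂ) (a (i + 2)) * b (i + 1)) with hP
        set e := (starRingEnd ℂ) (a (n + 2)) * b (n + 1) with he
        set c := lam - ((‖a (n + 1)‖ ^ 2 : ℝ):ℂ) - ((‖b (n + 1)‖ ^ 2 : ℝ):ℂ) with hc
        set d := a (n + 1) * (starRingEnd ℂ) (b n) with hd
        have expand : P * e * (c / e * xseq a b lam (n+1) - d / e * xseq a b lam n)
            = (c / e * e) * (P * xseq a b lam (n+1)) - (d / e * e) * (P * xseq a b lam n) := by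
          ring
        rw [expand, div_mul_cancel₀ c hne', div_mul_cancel₀ d hne', h1, h2]
        have hcoef : d * ((starRingEnd ℂ) (a (n + 1)) * b n)
            = ((‖a (n+1)‖ ^ 2 * ‖b n‖ ^ 2 : ℝ) : ℂ) := by
          have : d * ((starRingEnd ℂ) (a (n + 1)) * b n)
              = -(b n * (starRingEnd ℂ) (a (n+1))) * -(a (n+1) * (starRingEnd ℂ) (b n)) := by
            rw [hd]; ring
          rw [this, conj_sq_helper]
        rw [show yseq a b lam (n+1+1) =
          c * yseq a b lam (n + 1) -
            ((‖a (n + 1)‖ ^ 2 * ‖b n‖ ^ 2 : ℝ) : ℂ) * yseq a b lam n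
          from rfl]
        rw [← hcoef]
        ring
      · rw [Finset.prod_range_succ]
        calc (∏ i ∈ Finset.range n, ((starRingEnd ℂ) (a (i + 2)) * b (i + 1))) *
              ((starRingEnd ℂ) (a (n + 2)) * b (n + 1)) * xseq a b lam (n+1)
            = ((starRingEnd ℂ) (a (n + 2)) * b (n + 1)) *
              ((∏ i ∈ Finset.range n, ((starRingEnd ℂ) (a (i + 2)) * b (i + 1))) *
                xseq a b lam (n+1)) := by ring
          _ = ((starRingEnd ℂ) (a (n + 1 + 1)) * b (n + 1)) * yseq a b lam (n + 1) := by
              rw [h1]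
  exact (key M le_rfl).1
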